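/- The map ψ : Y → X is a surjective local homeomorphism. -/

import Mathlib

noncomputable section

/-- The 2-sphere, realized as the unit sphere `{(c,z) : |c|² + z² = 1}` in `ℂ × ℝ`,
with the subspace topology. -/
def TwoSphere : Set (ℂ × ℝ) := {p | ‖p.1‖ ^ 2 + p.2 ^ 2 = 1}

/-- The relation `r₀` on `S²`: `r₀ (c,z) (c',z')` iff `z ≠ 0`, `c' = -c` and `z' = z`. -/
def sphRel (a b : TwoSphere) : Prop :=
  a.1.2 ≠ 0 ∧ b.1.1 = -a.1.1 ∧ b.1.2 = a.1.2

/-- The twisted sphere `X`: the quotient of `S²` by the equivalence relation generated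
by `r₀`, with the quotient topology. -/
abbrev TwistedSphere : Type := Quot (Relation.EqvGen sphRel)

/-- The quotient map `q : S² → X`. -/
abbrev sphQ : TwoSphere → TwistedSphere := Quot.mk (Relation.EqvGen sphRel)

/-- `V = S² ∖ E`: the points of the sphere whose `ℝ`-coordinate is nonzero
(the sphere minus the equator). -/
def sphV : Set TwoSphere := {p | p.1.2 ≠ 0}

/-- The (discontinuous) "angle halving" map `α : V → S²`,
`α(c,z) = (√|c| · c^{1/2}, z)` where `c^{1/2}` is the principal complex square root.
It fixes the two poles, where `c = 0`. -/
def sphAlpha (v : sphV) : TwoSphere :=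
  ⟨((Real.sqrt ‖v.1.1.1‖ : ℂ) * v.1.1.1 ^ (1/2 : ℂ), v.1.1.2), by
    obtain ⟨⟨⟨c, z⟩, hmem⟩, -⟩ := v
    simp only [TwoSphere, Set.mem_setOf_eq] at hmem ⊢
    have h1 : ‖(Real.sqrt ‖c‖ : ℂ) * c ^ (1/2 : ℂ)‖
        = ‖c‖ := by
      rw [norm_mul, Complex.norm_real, Real.norm_of_nonneg (Real.sqrt_nonneg _)]
      have h2 : (1/2 : ℂ) = ((1/2 : ℝ) : ℂ) := by norm_num
      rw [h2, Complex.norm_cpow_real, ← Real.sqrt_eq_rpow,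
        Real.mul_self_sqrt (norm_nonneg _)]
    rw [h1, hmem]⟩

/-- `U = S² ∖ {poles}`: the points of the sphere whose `ℂ`-coordinate is nonzero. -/
def sphU : Set TwoSphere := {p | p.1.1 ≠ 0}

/-- `Y = U ⊔ V ⊔ V`, the disjoint union of `U` and two copies of `V`, with the
disjoint-union topology. -/
abbrev sphY : Type := sphU ⊕ (sphV ⊕ sphV)

/-- The map `ψ : Y → X`, equal to `q` on the `U` summand and to `q ∘ α` on each of the
two copies of `V`. -/
def sphPsi : sphY → TwistedSphere :=
  Sum.elim (fun u => sphQ u.1)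
    (Sum.elim (fun v => sphQ (sphAlpha v)) (fun v => sphQ (sphAlpha v)))
open Complex Topology Filter

section Helpers

lemma abs_alpha (c : ℂ) :
    ‖(Real.sqrt (‖c‖) : ℂ) * c ^ (1/2 : ℂ)‖ = ‖c‖ := by
  rw [norm_mul, Complex.norm_real, Real.norm_of_nonneg (Real.sqrt_nonneg _)]
  have h2 : (1/2 : ℂ) = ((1/2 : ℝ) : ℂ) := by norm_num
  rw [h2, Complex.norm_cpow_real, ← Real.sqrt_eq_rpow, Real.mul_self_sqrt (norm_nonneg _)]

lemma sq_alpha (c : ℂ) :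
    ((Real.sqrt (‖c‖) : ℂ) * c ^ (1/2 : ℂ)) ^ 2 = (‖c‖ : ℂ) * c := by
  rw [mul_pow]
  have h1 : ((Real.sqrt (‖c‖) : ℂ)) ^ 2 = (‖c‖ : ℂ) := by
    rw [← Complex.ofReal_pow, Real.sq_sqrt (norm_nonneg _)]
  have h2 : (c ^ (1/2 : ℂ)) ^ 2 = c := by
    have h3 : (1/2 : ℂ) = ((2 : ℕ) : ℂ)⁻¹ := by norm_num
    rw [h3, Complex.cpow_nat_inv_pow _ two_ne_zero]
  rw [h1, h2]

def R' (a b : TwoSphere) : Prop := a = b ∨ (a.1.2 ≠ 0 ∧ b.1.1 = -a.1.1 ∧ b.1.2 = a.1.2)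

lemma R'_refl (a : TwoSphere) : R' a a := Or.inl rfl

lemma R'_symm {a b : TwoSphere} : R' a b → R' b a := by
  rintro (rfl | ⟨hz, hc, hzz⟩)
  · exact Or.inl rfl
  · exact Or.inr ⟨by rw [hzz]; exact hz, by rw [hc, neg_neg], hzz.symm⟩

lemma R'_trans {a b c : TwoSphere} : R' a b → R' b c → R' a c := by
  rintro (rfl | ⟨hz, hc, hzz⟩) h2
  · exact h2
  · rcases h2 with rfl | ⟨hz2, hc2, hzz2⟩
    · exact Or.inr ⟨hz, hc, hzz⟩
    · exact Or.inl (Subtype.ext (Prod.ext (by rw [hc2, hc, neg_neg]) (by rw [hzz2, hzz]))).symm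

lemma eqvGen_to_R' {a b : TwoSphere} (h : Relation.EqvGen sphRel a b) : R' a b := by
  induction h with
  | rel x y hxy => exact Or.inr hxy
  | refl x => exact R'_refl x
  | symm x y _ ih => exact R'_symm ih
  | trans x y z _ _ ih1 ih2 => exact R'_trans ih1 ih2

lemma quot_mk_eq_iff (a b : TwoSphere) : sphQ a = sphQ b ↔ R' a b := by
  constructor
  · intro h
    have h1 := Quot.eq.mp h
    rw [(Relation.EqvGen.is_equivalence sphRel).eqvGen_iff] at h1
    exact eqvGen_to_R' h1
  · rintro (rfl | h)
    · rfl
    · exact Quot.sound (Relation.EqvGen.rel _ _ h)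

lemma isOpen_sphV : IsOpen sphV :=
  isOpen_compl_singleton.preimage (continuous_snd.comp continuous_subtype_val)

lemma isOpen_sphU : IsOpen sphU :=
  isOpen_compl_singleton.preimage (continuous_fst.comp continuous_subtype_val)

end Helpers

section Sigma

def sigmaS (p : TwoSphere) : TwoSphere :=
  ⟨(-p.1.1, p.1.2), by
    have hp := p.2
    simp only [TwoSphere, Set.mem_setOf_eq] at hp ⊢
    simpa using hp⟩

lemma continuous_sigmaS : Continuous sigmaS :=
  Continuous.subtype_mk
    (((continuous_fst.comp continuous_subtype_val).neg).prodMk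
      (continuous_snd.comp continuous_subtype_val)) _

lemma isOpenMap_sphQ : IsOpenMap sphQ := by
  intro W hW
  rw [← isQuotientMap_quot_mk.isOpen_preimage]
  have hpre : sphQ ⁻¹' (sphQ '' W) = W ∪ (sigmaS ⁻¹' W ∩ sphV) := by
    ext p
    simp only [Set.mem_preimage, Set.mem_image, Set.mem_union, Set.mem_inter_iff]
    constructor
    · rintro ⟨w, hw, hqw⟩
      rcases (quot_mk_eq_iff w p).mp hqw with rfl | ⟨hz, hc, hzz⟩
      · exact Or.inl hw
      · refine Or.inr ⟨?_, ?_⟩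
        · have hsp : sigmaS p = w :=
            Subtype.ext (Prod.ext (by show -p.1.1 = w.1.1; rw [hc, neg_neg])
              (by show p.1.2 = w.1.2; rw [hzz]))
          show sigmaS p ∈ W
          rw [hsp]; exact hw
        · show p.1.2 ≠ 0
          rw [hzz]; exact hz
    · rintro (hp | ⟨hw, hv⟩)
      · exact ⟨p, hp, rfl⟩
      · refine ⟨sigmaS p, hw, (quot_mk_eq_iff _ _).mpr (Or.inr ⟨hv, ?_, rfl⟩)⟩
        show p.1.1 = -(-p.1.1)
        rw [neg_neg]
  rw [hpre]
  exact hW.union ((hW.preimage continuous_sigmaS).inter isOpen_sphV)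

end Sigma

section TMap

lemma tMap_mem (p : TwoSphere) :
    (p.1.1 ^ 2 * ((‖p.1.1‖ : ℝ) : ℂ)⁻¹, p.1.2) ∈ TwoSphere := by
  have hp := p.2
  simp only [TwoSphere, Set.mem_setOf_eq] at hp ⊢
  rcases eq_or_ne p.1.1 0 with h | h
  · rw [h] at hp ⊢; simpa using hp
  · have habs : ‖p.1.1 ^ 2 * ((‖p.1.1‖ : ℝ) : ℂ)⁻¹‖
        = ‖p.1.1‖ := by
      rw [norm_mul, norm_pow, norm_inv, Complex.norm_real,
        Real.norm_of_nonneg (norm_nonneg _), pow_two, mul_assoc,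
        mul_inv_cancel₀ (by simpa using h), mul_one]
    rw [habs]; exact hp

def tMap (p : TwoSphere) : TwoSphere := ⟨_, tMap_mem p⟩

lemma tMap_fst (p : TwoSphere) :
    (tMap p).1.1 = p.1.1 ^ 2 * ((‖p.1.1‖ : ℝ) : ℂ)⁻¹ := rfl

lemma tMap_snd (p : TwoSphere) : (tMap p).1.2 = p.1.2 := rfl

lemma abs_tMap (p : TwoSphere) : ‖(tMap p).1.1‖ = ‖p.1.1‖ := by
  rw [tMap_fst]
  rcases eq_or_ne p.1.1 0 with h | h
  · rw [h]; simp
  · rw [norm_mul, norm_pow, norm_inv, Complex.norm_real,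
      Real.norm_of_nonneg (norm_nonneg _), pow_two, mul_assoc,
      mul_inv_cancel₀ (by simpa using h), mul_one]

lemma sq_tMap_fst (p : TwoSphere) :
    ((‖(tMap p).1.1‖ : ℝ) : ℂ) * (tMap p).1.1 = p.1.1 ^ 2 := by
  rw [abs_tMap, tMap_fst]
  rcases eq_or_ne p.1.1 0 with h | h
  · rw [h]; simp
  · have h2 : ((‖p.1.1‖ : ℝ) : ℂ) ≠ 0 := by simpa using h
    field_simp

lemma continuous_tMap : Continuous tMap := by
  apply Continuous.subtype_mk
  refine Continuous.prodMk ?_ (continuous_snd.comp continuous_subtype_val)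
  rw [continuous_iff_continuousAt]
  intro p
  have hc : Continuous fun q : TwoSphere => q.1.1 := continuous_fst.comp continuous_subtype_val
  rcases eq_or_ne p.1.1 0 with h | h
  · have habs : Filter.Tendsto (fun q : TwoSphere => ‖q.1.1‖) (nhds p) (nhds 0) := by
      have h1 : Continuous fun q : TwoSphere => ‖q.1.1‖ :=
        continuous_norm.comp hc
      have h2 := h1.continuousAt (x := p)
      rwa [ContinuousAt, h, norm_zero] at h2
    have hz : Filter.Tendsto (fun q : TwoSphere => q.1.1 ^ 2 * ((‖q.1.1‖ : ℝ) : ℂ)⁻¹)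
        (nhds p) (nhds 0) := by
      refine squeeze_zero_norm (a := fun q : TwoSphere => ‖q.1.1‖) (fun q => ?_) habs
      rcases eq_or_ne q.1.1 0 with h0 | h0
      · simp [h0]
      · rw [norm_mul, norm_pow, norm_inv, Complex.norm_real,
          Real.norm_of_nonneg (norm_nonneg _), pow_two, mul_assoc,
          mul_inv_cancel₀ (by simpa using h0), mul_one]
    have hval : p.1.1 ^ 2 * ((‖p.1.1‖ : ℝ) : ℂ)⁻¹ = 0 := by rw [h]; simp
    rw [ContinuousAt]
    rw [hval]  -- may fail due to beta
    exact hz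
  · refine ContinuousAt.mul ((hc.pow 2).continuousAt) (ContinuousAt.inv₀ ?_ ?_)
    · exact (Complex.continuous_ofReal.comp (continuous_norm.comp hc)).continuousAt
    · simpa using h

end TMap

section Alpha

lemma alpha_fst (v : sphV) :
    (sphAlpha v).1.1 = (Real.sqrt (‖v.1.1.1‖) : ℂ) * v.1.1.1 ^ (1/2 : ℂ) := rfl

lemma alpha_snd (v : sphV) : (sphAlpha v).1.2 = v.1.1.2 := rfl

lemma alpha_sq (v : sphV) :
    (sphAlpha v).1.1 ^ 2 = (‖v.1.1.1‖ : ℂ) * v.1.1.1 := by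
  rw [alpha_fst, sq_alpha]

lemma alpha_abs (v : sphV) : ‖(sphAlpha v).1.1‖ = ‖v.1.1.1‖ := by
  rw [alpha_fst, abs_alpha]

lemma tMap_alpha (v : sphV) : tMap (sphAlpha v) = v.1 := by
  apply Subtype.ext
  apply Prod.ext
  · rw [tMap_fst, alpha_abs]
    have h1 : (sphAlpha v).1.1 ^ 2 = (‖v.1.1.1‖ : ℂ) * v.1.1.1 := alpha_sq v
    rw [h1]
    rcases eq_or_ne v.1.1.1 0 with h | h
    · rw [h]; simp
    · have h2 : ((‖v.1.1.1‖ : ℝ) : ℂ) ≠ 0 := by simpa using h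
      field_simp
  · rw [tMap_snd, alpha_snd]

lemma quot_alpha_eq (v : sphV) (b : TwoSphere)
    (hsq : b.1.1 ^ 2 = (sphAlpha v).1.1 ^ 2) (hz : b.1.2 = v.1.1.2) :
    sphQ (sphAlpha v) = sphQ b := by
  apply (quot_mk_eq_iff _ _).mpr
  rcases sq_eq_sq_iff_eq_or_eq_neg.mp hsq with h | h
  · exact Or.inl (Subtype.ext (Prod.ext h hz)).symm
  · exact Or.inr ⟨v.2, h, hz⟩

lemma abs_mul_inj {c c' : ℂ} (h : (‖c‖ : ℂ) * c = (‖c'‖ : ℂ) * c') :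
    c = c' := by
  have habs : ‖c‖ = ‖c'‖ := by
    have h2 : ‖(‖c‖ : ℂ) * c‖ = ‖(‖c'‖ : ℂ) * c'‖ := by rw [h]
    rw [norm_mul, norm_mul, Complex.norm_real, Complex.norm_real,
      Real.norm_of_nonneg (norm_nonneg _), Real.norm_of_nonneg (norm_nonneg _)] at h2
    exact (mul_self_inj (norm_nonneg _) (norm_nonneg _)).mp h2
  rcases eq_or_ne (‖c‖) 0 with h0 | h0
  · have hc0 : c = 0 := by rwa [norm_eq_zero] at h0
    have hc0' : c' = 0 := by
      rw [habs] at h0; rwa [norm_eq_zero] at h0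
    rw [hc0, hc0']
  · rw [habs] at h
    have h3 : ((‖c'‖ : ℝ) : ℂ) ≠ 0 := by
      simpa using (by rwa [habs] at h0 : ‖c'‖ ≠ 0)
    exact mul_left_cancel₀ h3 h

lemma injective_qalpha : Function.Injective fun v : sphV => sphQ (sphAlpha v) := by
  intro v v' h
  have hR := (quot_mk_eq_iff _ _).mp h
  have key : (sphAlpha v).1.1 ^ 2 = (sphAlpha v').1.1 ^ 2
      ∧ (sphAlpha v).1.2 = (sphAlpha v').1.2 := by
    rcases hR with heq | ⟨hz, hc, hzz⟩
    · rw [heq]; exact ⟨rfl, rfl⟩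
    · exact ⟨by rw [hc, neg_sq], hzz.symm⟩
  obtain ⟨hsq, hz⟩ := key
  rw [alpha_sq v, alpha_sq v'] at hsq
  exact Subtype.ext (Subtype.ext (Prod.ext (abs_mul_inj hsq) hz))

lemma isOpenMap_qalpha : IsOpenMap fun v : sphV => sphQ (sphAlpha v) := by
  intro O hO
  have himg : (fun v : sphV => sphQ (sphAlpha v)) '' O = sphQ '' (sphAlpha '' O) := by
    rw [Set.image_image]
  rw [himg, ← isQuotientMap_quot_mk.isOpen_preimage]
  have hpre : sphQ ⁻¹' (sphQ '' (sphAlpha '' O)) = sphV ∩ tMap ⁻¹' (Subtype.val '' O) := by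
    ext p
    simp only [Set.mem_preimage, Set.mem_image, Set.mem_inter_iff]
    constructor
    · rintro ⟨b, ⟨v, hv, rfl⟩, hqb⟩
      rcases (quot_mk_eq_iff _ _).mp hqb with heq | ⟨hz, hc, hzz⟩
      · refine ⟨?_, v, hv, by rw [← heq, tMap_alpha]⟩
        show p.1.2 ≠ 0
        rw [← heq, alpha_snd]; exact v.2
      · refine ⟨?_, v, hv, ?_⟩
        · show p.1.2 ≠ 0
          rw [hzz, alpha_snd]; exact v.2
        · have ht : tMap p = tMap (sphAlpha v) := by
            apply Subtype.ext
            apply Prod.ext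
            · rw [tMap_fst, tMap_fst, hc]
              simp [neg_sq]
            · rw [tMap_snd, tMap_snd, hzz]
          rw [ht, tMap_alpha]
    · rintro ⟨hz, v, hv, hvp⟩
      refine ⟨sphAlpha v, ⟨v, hv, rfl⟩, quot_alpha_eq v p ?_ ?_⟩
      · rw [alpha_sq]
        have h1 : v.1.1.1 = (tMap p).1.1 := by rw [hvp]
        rw [h1]
        exact (sq_tMap_fst p).symm
      · have h2 : v.1.1.2 = (tMap p).1.2 := by rw [hvp]
        rw [h2, tMap_snd]
  rw [hpre]
  exact isOpen_sphV.inter ((isOpen_sphV.isOpenEmbedding_subtypeVal.isOpenMap O hO).preimage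
    continuous_tMap)

end Alpha

section Continuity

lemma abs_beta (c : ℂ) :
    ‖(Real.sqrt (‖c‖) : ℂ) * (Complex.I * (-c) ^ (1/2 : ℂ))‖
      = ‖c‖ := by
  rw [norm_mul, norm_mul, Complex.norm_I, one_mul, Complex.norm_real,
    Real.norm_of_nonneg (Real.sqrt_nonneg _)]
  have h2 : (1/2 : ℂ) = ((1/2 : ℝ) : ℂ) := by norm_num
  rw [h2, Complex.norm_cpow_real, norm_neg, ← Real.sqrt_eq_rpow,
    Real.mul_self_sqrt (norm_nonneg _)]

lemma sq_beta (c : ℂ) :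
    ((Real.sqrt (‖c‖) : ℂ) * (Complex.I * (-c) ^ (1/2 : ℂ))) ^ 2
      = (‖c‖ : ℂ) * c := by
  rw [mul_pow, mul_pow, Complex.I_sq]
  have h1 : ((Real.sqrt (‖c‖) : ℂ)) ^ 2 = (‖c‖ : ℂ) := by
    rw [← Complex.ofReal_pow, Real.sq_sqrt (norm_nonneg _)]
  have h2 : ((-c) ^ (1/2 : ℂ)) ^ 2 = -c := by
    have h3 : (1/2 : ℂ) = ((2 : ℕ) : ℂ)⁻¹ := by norm_num
    rw [h3, Complex.cpow_nat_inv_pow _ two_ne_zero]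
  rw [h1, h2]
  ring

def betaMap (v : sphV) : TwoSphere :=
  ⟨((Real.sqrt (‖v.1.1.1‖) : ℂ) * (Complex.I * (-v.1.1.1) ^ (1/2 : ℂ)), v.1.1.2), by
    have hp := v.1.2
    simp only [TwoSphere, Set.mem_setOf_eq] at hp ⊢
    rw [abs_beta]; exact hp⟩

lemma qalpha_eq_qbeta (v : sphV) : sphQ (sphAlpha v) = sphQ (betaMap v) := by
  apply quot_alpha_eq v (betaMap v)
  · show ((Real.sqrt (‖v.1.1.1‖) : ℂ) * (Complex.I * (-v.1.1.1) ^ (1/2 : ℂ))) ^ 2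
      = (sphAlpha v).1.1 ^ 2
    rw [sq_beta, alpha_sq]
  · rfl

lemma continuous_qalpha : Continuous fun v : sphV => sphQ (sphAlpha v) := by
  rw [continuous_iff_continuousAt]
  intro v₀
  have hcont_c : Continuous fun v : sphV => v.1.1.1 :=
    continuous_fst.comp (continuous_subtype_val.comp continuous_subtype_val)
  have hcont_z : Continuous fun v : sphV => v.1.1.2 :=
    continuous_snd.comp (continuous_subtype_val.comp continuous_subtype_val)
  have hcont_s : Continuous fun v : sphV => ((Real.sqrt (‖v.1.1.1‖) : ℝ) : ℂ) :=
    Complex.continuous_ofReal.comp (Real.continuous_sqrt.comp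
      (continuous_norm.comp hcont_c))
  have hq : Continuous sphQ := continuous_quot_mk
  by_cases h0 : v₀.1.1.1 = 0
  · -- pole : α is continuous at v₀
    have halpha : ContinuousAt sphAlpha v₀ := by
      rw [IsInducing.subtypeVal.continuousAt_iff]
      show ContinuousAt (fun v : sphV =>
        (((Real.sqrt (‖v.1.1.1‖) : ℝ) : ℂ) * v.1.1.1 ^ (1/2 : ℂ), v.1.1.2)) v₀
      apply ContinuousAt.prodMk _ hcont_z.continuousAt
      have habs : Filter.Tendsto (fun v : sphV => ‖v.1.1.1‖) (nhds v₀) (nhds 0) := by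
        have h1 : Continuous fun v : sphV => ‖v.1.1.1‖ :=
          continuous_norm.comp hcont_c
        have h2 := h1.continuousAt (x := v₀)
        rwa [ContinuousAt, h0, norm_zero] at h2
      have hz : Filter.Tendsto
          (fun v : sphV => ((Real.sqrt (‖v.1.1.1‖) : ℝ) : ℂ) * v.1.1.1 ^ (1/2 : ℂ))
          (nhds v₀) (nhds 0) := by
        refine squeeze_zero_norm (a := fun v : sphV => ‖v.1.1.1‖)
          (fun v => ?_) habs
        rw [abs_alpha]
      have hval : ((Real.sqrt (‖v₀.1.1.1‖) : ℝ) : ℂ) * v₀.1.1.1 ^ (1/2 : ℂ) = 0 := by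
        rw [h0]; simp
      rw [ContinuousAt, hval]
      exact hz
    exact ContinuousAt.comp hq.continuousAt halpha
  · by_cases h1 : v₀.1.1.1 ∈ Complex.slitPlane
    · -- slit plane : cpow is continuous at c₀
      have halpha : ContinuousAt sphAlpha v₀ := by
        rw [IsInducing.subtypeVal.continuousAt_iff]
        show ContinuousAt (fun v : sphV =>
          (((Real.sqrt (‖v.1.1.1‖) : ℝ) : ℂ) * v.1.1.1 ^ (1/2 : ℂ), v.1.1.2)) v₀
        refine ContinuousAt.prodMk ?_ hcont_z.continuousAt
        exact hcont_s.continuousAt.mul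
          (ContinuousAt.comp (f := fun v : sphV => v.1.1.1) (continuousAt_cpow_const h1) hcont_c.continuousAt)
      exact ContinuousAt.comp hq.continuousAt halpha
    · -- negative real axis : use the other branch
      have hFg : (fun v : sphV => sphQ (sphAlpha v)) = fun v : sphV => sphQ (betaMap v) :=
        funext fun v => qalpha_eq_qbeta v
      rw [hFg]
      have hslit : -v₀.1.1.1 ∈ Complex.slitPlane := by
        rw [Complex.mem_slitPlane_iff] at h1 ⊢
        push_neg at h1
        rcases h1 with ⟨hre, him⟩
        left
        rw [Complex.neg_re]
        rcases lt_or_eq_of_le hre with h | h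
        · linarith
        · exfalso; exact h0 (Complex.ext h him)
      have hbeta : ContinuousAt betaMap v₀ := by
        rw [IsInducing.subtypeVal.continuousAt_iff]
        show ContinuousAt (fun v : sphV =>
          (((Real.sqrt (‖v.1.1.1‖) : ℝ) : ℂ)
            * (Complex.I * (-v.1.1.1) ^ (1/2 : ℂ)), v.1.1.2)) v₀
        refine ContinuousAt.prodMk ?_ hcont_z.continuousAt
        refine hcont_s.continuousAt.mul (ContinuousAt.mul continuousAt_const ?_)
        exact ContinuousAt.comp (f := fun v : sphV => -v.1.1.1) (continuousAt_cpow_const hslit) hcont_c.continuousAt.neg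
      exact ContinuousAt.comp hq.continuousAt hbeta

end Continuity

section Assembly

lemma restrict_isOpenEmbedding {A Z W : Type} [TopologicalSpace A] [TopologicalSpace Z]
    [TopologicalSpace W] {f : Z → W} {e : A → Z} (he : IsOpenEmbedding e)
    (hfe : IsOpenEmbedding (f ∘ e)) : IsOpenEmbedding ((Set.range e).restrict f) := by
  have heq : (Set.range e).restrict f
      = (f ∘ e) ∘ (he.isEmbedding.toHomeomorph).symm := by
    funext x
    show f x.1 = f (e ((he.isEmbedding.toHomeomorph).symm x))
    congr 1
    have h2 := congrArg Subtype.val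
      ((he.isEmbedding.toHomeomorph).apply_symm_apply x)
    exact h2.symm
  rw [heq]
  exact hfe.comp (Homeomorph.isOpenEmbedding _)

lemma qU_isOpenEmbedding (u₀ : sphU) :
    ∃ O : Set sphU, IsOpen O ∧ u₀ ∈ O ∧ IsOpenEmbedding fun o : O => sphQ o.1.1 := by
  have hcont_c : Continuous fun u : sphU => u.1.1.1 :=
    (continuous_fst.comp continuous_subtype_val).comp continuous_subtype_val
  refine ⟨{u : sphU | 0 < ((starRingEnd ℂ) u₀.1.1.1 * u.1.1.1).re}, ?_, ?_, ?_⟩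
  · exact isOpen_lt continuous_const
      (Complex.continuous_re.comp (continuous_const.mul hcont_c))
  · show 0 < ((starRingEnd ℂ) u₀.1.1.1 * u₀.1.1.1).re
    rw [mul_comm, Complex.mul_conj]
    simpa using Complex.normSq_pos.mpr u₀.2
  · apply IsOpenEmbedding.of_continuous_injective_isOpenMap
    · exact continuous_quot_mk.comp
        (continuous_subtype_val.comp continuous_subtype_val)
    · intro o o' h
      rcases (quot_mk_eq_iff _ _).mp h with heq | ⟨hz, hc, hzz⟩
      · exact Subtype.ext (Subtype.ext heq)
      · exfalso
        have ho : 0 < ((starRingEnd ℂ) u₀.1.1.1 * o.1.1.1.1).re := o.2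
        have ho' : 0 < ((starRingEnd ℂ) u₀.1.1.1 * o'.1.1.1.1).re := o'.2
        rw [hc, mul_neg, Complex.neg_re] at ho'
        linarith
    · exact isOpenMap_sphQ.comp
        (isOpen_sphU.isOpenEmbedding_subtypeVal.isOpenMap.comp
          (isOpen_lt continuous_const
            (Complex.continuous_re.comp (continuous_const.mul hcont_c))
            |>.isOpenEmbedding_subtypeVal.isOpenMap))

end Assembly

/-- `ψ : Y → X` is a surjective local homeomorphism. -/
theorem stmt_11 :
    Function.Surjective sphPsi ∧ IsLocalHomeomorph sphPsi := by
  constructor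
  · intro x
    induction x using Quot.ind with
    | mk p =>
      by_cases hc : p.1.1 = 0
      · have hz : p.1.2 ≠ 0 := by
          intro h0
          have hp := p.2
          simp only [TwoSphere, Set.mem_setOf_eq, hc, h0] at hp
          simp at hp
        refine ⟨Sum.inr (Sum.inl ⟨p, hz⟩), ?_⟩
        show sphQ (sphAlpha ⟨p, hz⟩) = sphQ p
        congr 1
        apply Subtype.ext
        apply Prod.ext
        · show ((Real.sqrt (‖p.1.1‖) : ℝ) : ℂ) * p.1.1 ^ (1/2 : ℂ) = p.1.1
          rw [hc]
          simp
        · rfl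
      · exact ⟨Sum.inl ⟨p, hc⟩, rfl⟩
  · rw [isLocalHomeomorph_iff_isOpenEmbedding_restrict]
    intro y
    obtain u | v | v := y
    · obtain ⟨O, hO, huO, hemb⟩ := qU_isOpenEmbedding u
      have he : IsOpenEmbedding fun o : O => (Sum.inl o.1 : sphY) :=
        IsOpenEmbedding.inl.comp hO.isOpenEmbedding_subtypeVal
      refine ⟨Set.range (fun o : O => (Sum.inl o.1 : sphY)), ?_, ?_⟩
      · exact he.isOpen_range.mem_nhds ⟨⟨u, huO⟩, rfl⟩
      · exact restrict_isOpenEmbedding he hemb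
    · have he : IsOpenEmbedding fun v : sphV => (Sum.inr (Sum.inl v) : sphY) :=
        IsOpenEmbedding.inr.comp IsOpenEmbedding.inl
      refine ⟨Set.range (fun v : sphV => (Sum.inr (Sum.inl v) : sphY)), ?_, ?_⟩
      · exact he.isOpen_range.mem_nhds ⟨v, rfl⟩
      · exact restrict_isOpenEmbedding he
          (IsOpenEmbedding.of_continuous_injective_isOpenMap continuous_qalpha
            injective_qalpha isOpenMap_qalpha)
    · have he : IsOpenEmbedding fun v : sphV => (Sum.inr (Sum.inr v) : sphY) :=
        IsOpenEmbedding.inr.comp IsOpenEmbedding.inr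
      refine ⟨Set.range (fun v : sphV => (Sum.inr (Sum.inr v) : sphY)), ?_, ?_⟩
      · exact he.isOpen_range.mem_nhds ⟨v, rfl⟩
      · exact restrict_isOpenEmbedding he
          (IsOpenEmbedding.of_continuous_injective_isOpenMap continuous_qalpha
            injective_qalpha isOpenMap_qalpha)
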